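/- For open sets J, K ⊆ ℝ and names ρ, σ, τ: if J ⊩ ρ = σ and K ⊩ ρ ∈ τ, then (J ∩ K) ⊩ σ ∈ τ. -/

import Mathlib

/-- Names over ℝ: a name is a family of pairs of a name and an open set of reals. -/
inductive Name : Type 1
  | mk (ι : Type) (elem : ι → Name) (cond : ι → Set ℝ) (hopen : ∀ i, IsOpen (cond i)) : Name

universe u

/-- Natural (Hessenberg) sum of ordinals, as in Mathlib's former `Ordinal.nadd`. -/
noncomputable def Ordinal.nadd : Ordinal.{u} → Ordinal.{u} → Ordinal.{u}
  | a, b =>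
    max (Ordinal.blsub.{u, u} a fun a' _ => Ordinal.nadd a' b)
      (Ordinal.blsub.{u, u} b fun b' _ => Ordinal.nadd a b')
termination_by o₁ o₂ => (o₁, o₂)

namespace NaturalOps

scoped infixl:65 " ♯ " => Ordinal.nadd

end NaturalOps

open NaturalOps in
theorem Ordinal.nadd_lt_nadd_right {a b : Ordinal.{u}} (h : a < b) (c : Ordinal.{u}) :
    a ♯ c < b ♯ c := by
  rw [Ordinal.nadd.eq_1 b c]
  exact lt_max_of_lt_left (Ordinal.lt_blsub (fun a' _ => Ordinal.nadd a' c) a h)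

open NaturalOps in
theorem Ordinal.nadd_lt_nadd_left {b c : Ordinal.{u}} (h : b < c) (a : Ordinal.{u}) :
    a ♯ b < a ♯ c := by
  rw [Ordinal.nadd.eq_1 a c]
  exact lt_max_of_lt_right (Ordinal.lt_blsub (fun b' _ => Ordinal.nadd a b') b h)

open NaturalOps in
theorem Ordinal.nadd_comm : ∀ a b : Ordinal.{u}, a ♯ b = b ♯ a
  | a, b => by
    rw [Ordinal.nadd.eq_1 a b, Ordinal.nadd.eq_1 b a, max_comm]
    congr <;> ext c hc
    · exact Ordinal.nadd_comm a c
    · exact Ordinal.nadd_comm c b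
termination_by a b => (a, b)

namespace Name

/-- The index type of the family of pairs of a name. -/
def idx : Name → Type
  | mk ι _ _ _ => ι

/-- The name component of the `i`-th pair. -/
def elem : (σ : Name) → σ.idx → Name
  | mk _ e _ _ => e

/-- The open-set component of the `i`-th pair. -/
def cond : (σ : Name) → σ.idx → Set ℝ
  | mk _ _ c _ => c

theorem cond_isOpen : ∀ (σ : Name) (i : σ.idx), IsOpen (σ.cond i)
  | mk _ _ _ h => h

/-- Rank of a name, used for the recursive definition of forcing. -/
noncomputable def rank : Name → Ordinal.{0}
  | mk _ e _ _ => Ordinal.lsub fun i => rank (e i)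

theorem rank_elem_lt : ∀ (σ : Name) (i : σ.idx), (σ.elem i).rank < σ.rank
  | mk ι e c h, i => by
    simpa [rank, elem] using Ordinal.lt_lsub (fun i => rank (e i)) i

open NaturalOps

mutual
  /-- `feq σ τ J` means `J ⊩ σ = τ`. -/
  def feq (σ τ : Name) (J : Set ℝ) : Prop :=
    (∀ i : σ.idx, fmem (σ.elem i) τ (J ∩ σ.cond i)) ∧
    (∀ j : τ.idx, fmem (τ.elem j) σ (J ∩ τ.cond j))
  termination_by σ.rank ♯ τ.rank
  decreasing_by
    · exact Ordinal.nadd_lt_nadd_right (rank_elem_lt σ i) τ.rank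
    · rw [Ordinal.nadd_comm]
      exact Ordinal.nadd_lt_nadd_left (rank_elem_lt τ j) σ.rank

  /-- `fmem σ τ J` means `J ⊩ σ ∈ τ`. -/
  def fmem (σ τ : Name) (J : Set ℝ) : Prop :=
    ∀ r ∈ J, ∃ (j : τ.idx) (J' : Set ℝ), IsOpen J' ∧ r ∈ J' ∩ τ.cond j ∧
      feq σ (τ.elem j) (J' ∩ τ.cond j)
  termination_by σ.rank ♯ τ.rank
  decreasing_by
    exact Ordinal.nadd_lt_nadd_left (rank_elem_lt τ j) σ.rank
end

end Name

open NaturalOps in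
theorem Ordinal.nadd_lt_nadd {a b c d : Ordinal.{u}} (h₁ : a < b) (h₂ : c < d) :
    a ♯ c < b ♯ d :=
  (Ordinal.nadd_lt_nadd_left h₂ a).trans (Ordinal.nadd_lt_nadd_right h₁ d)

namespace Name

open NaturalOps

theorem feq_iff (σ τ : Name) (J : Set ℝ) : feq σ τ J ↔
    ((∀ i : σ.idx, fmem (σ.elem i) τ (J ∩ σ.cond i)) ∧
     (∀ j : τ.idx, fmem (τ.elem j) σ (J ∩ τ.cond j))) := by
  rw [feq]

theorem fmem_iff (σ τ : Name) (J : Set ℝ) : fmem σ τ J ↔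
    (∀ r ∈ J, ∃ (j : τ.idx) (J' : Set ℝ), IsOpen J' ∧ r ∈ J' ∩ τ.cond j ∧
      feq σ (τ.elem j) (J' ∩ τ.cond j)) := by
  rw [fmem]

theorem fmem_mono {σ τ : Name} {J J' : Set ℝ} (hsub : J' ⊆ J) (h : fmem σ τ J) :
    fmem σ τ J' := by
  rw [fmem_iff] at h ⊢
  exact fun r hr => h r (hsub hr)

theorem feq_mono {σ τ : Name} {J J' : Set ℝ} (hsub : J' ⊆ J) (h : feq σ τ J) :
    feq σ τ J' := by
  rw [feq_iff] at h ⊢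
  exact ⟨fun i => fmem_mono (Set.inter_subset_inter_left _ hsub) (h.1 i),
         fun j => fmem_mono (Set.inter_subset_inter_left _ hsub) (h.2 j)⟩

theorem feq_symm {σ τ : Name} {J : Set ℝ} (h : feq σ τ J) : feq τ σ J := by
  rw [feq_iff] at h ⊢
  exact ⟨h.2, h.1⟩

mutual
  theorem feq_trans : ∀ (ρ σ τ : Name) (J K : Set ℝ),
      feq ρ σ J → feq σ τ K → feq ρ τ (J ∩ K)
    | ρ, σ, τ, J, K, h₁, h₂ => by
      rw [feq_iff] at h₁ h₂ ⊢
      constructor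
      · intro i
        have := fmem_congr_right (ρ.elem i) σ τ (J ∩ ρ.cond i) K (h₁.1 i)
          (by rw [feq_iff]; exact h₂)
        exact fmem_mono (by intro r hr; exact ⟨⟨hr.1.1, hr.2⟩, hr.1.2⟩) this
      · intro k
        have := fmem_congr_right (τ.elem k) σ ρ (K ∩ τ.cond k) J (h₂.2 k)
          (feq_symm (by rw [feq_iff]; exact h₁))
        exact fmem_mono (by intro r hr; exact ⟨⟨hr.1.2, hr.2⟩, hr.1.1⟩) this
  termination_by ρ σ τ => ρ.rank ♯ τ.rank ♯ σ.rank
  decreasing_by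
    · exact Ordinal.nadd_lt_nadd_right
        (Ordinal.nadd_lt_nadd_right (rank_elem_lt ρ i) τ.rank) σ.rank
    · rw [Ordinal.nadd_comm (rank (τ.elem k)) ρ.rank]
      exact Ordinal.nadd_lt_nadd_right
        (Ordinal.nadd_lt_nadd_left (rank_elem_lt τ k) ρ.rank) σ.rank

  theorem fmem_congr_right : ∀ (x σ τ : Name) (J K : Set ℝ),
      fmem x σ J → feq σ τ K → fmem x τ (J ∩ K)
    | x, σ, τ, J, K, h₁, h₂ => by
      rw [fmem_iff] at h₁ ⊢
      rw [feq_iff] at h₂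
      intro r hr
      obtain ⟨j, J', hJ'o, ⟨hrJ', hrc⟩, hfeq⟩ := h₁ r hr.1
      have hm := h₂.1 j
      rw [fmem_iff] at hm
      obtain ⟨k, J₃, hJ₃o, ⟨hrJ₃, hrck⟩, hfeq₂⟩ := hm r ⟨hr.2, hrc⟩
      have := feq_trans x (σ.elem j) (τ.elem k) (J' ∩ σ.cond j) (J₃ ∩ τ.cond k)
        hfeq hfeq₂
      refine ⟨k, J' ∩ σ.cond j ∩ J₃, (hJ'o.inter (cond_isOpen σ j)).inter hJ₃o,
        ⟨⟨⟨hrJ', hrc⟩, hrJ₃⟩, hrck⟩, ?_⟩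
      exact feq_mono (by intro s hs; exact ⟨hs.1.1, hs.1.2, hs.2⟩) this
  termination_by x σ τ => x.rank ♯ τ.rank ♯ σ.rank
  decreasing_by
    exact Ordinal.nadd_lt_nadd (Ordinal.nadd_lt_nadd_left (rank_elem_lt τ k) x.rank)
      (rank_elem_lt σ j)
end

end Name

theorem forces_mem_congr_left (J K : Set ℝ) (hJ : IsOpen J) (hK : IsOpen K) (ρ σ τ : Name)
    (h₁ : Name.feq ρ σ J) (h₂ : Name.fmem ρ τ K) : Name.fmem σ τ (J ∩ K) := by
  rw [Name.fmem_iff] at h₂ ⊢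
  intro r hr
  obtain ⟨j, J', hJ'o, ⟨hrJ', hrc⟩, hfeq⟩ := h₂ r hr.2
  have := Name.feq_trans σ ρ (τ.elem j) J (J' ∩ τ.cond j) (Name.feq_symm h₁) hfeq
  refine ⟨j, J ∩ J', hJ.inter hJ'o, ⟨⟨hr.1, hrJ'⟩, hrc⟩, ?_⟩
  exact Name.feq_mono (by intro s hs; exact ⟨hs.1.1, hs.1.2, hs.2⟩) this
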